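/- For γ > 0 define L_γ : ℝ² → ℝ by L_γ(u,v) = (1/2)(u − sin v)² + (γ/2)(u − v)². Then inf L_γ = 0, and at the point (ū, v̄) with ū = 2γπ/(1+γ) and v̄ = 2π one has ∇L_γ(ū, v̄) = 0 while L_γ(ū, v̄) > 0. Consequently, for every γ > 0 there is no μ > 0 such that ‖∇L_γ(u,v)‖² ≥ 2μ(L_γ(u,v) − inf L_γ) holds for all (u,v) ∈ ℝ²; the penalized objective of Example 1 fails the joint PL condition for every penalty parameter γ. -/

import Mathlib

/-- The penalized objective `L_γ(u,v) = ½(u - sin v)² + (γ/2)(u - v)²` of Example 1. -/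
noncomputable def LEx1 (γ : ℝ) : EuclideanSpace ℝ (Fin 2) → ℝ :=
  fun p => 1 / 2 * (p 0 - Real.sin (p 1)) ^ 2 + γ / 2 * (p 0 - p 1) ^ 2

/-- **Lemma 5 (Appendix C.2).**
For every `γ > 0`, the penalized objective `L_γ(u,v) = ½(u - sin v)² + (γ/2)(u - v)²`
has infimum `0`, yet at `(ū, v̄) = (2γπ/(1+γ), 2π)` its gradient vanishes while
`L_γ(ū, v̄) > 0`. Consequently there is no `μ > 0` such that
`‖∇L_γ(u,v)‖² ≥ 2μ (L_γ(u,v) - inf L_γ)` holds for all `(u,v)`: the penalized objective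
of Example 1 fails the joint PL condition for every penalty parameter `γ`. -/
theorem stmt_5 (γ : ℝ) (hγ : 0 < γ) :
    (⨅ p : EuclideanSpace ℝ (Fin 2), LEx1 γ p) = 0 ∧
    HasGradientAt (LEx1 γ) 0
      (!₂[2 * γ * Real.pi / (1 + γ), 2 * Real.pi] : EuclideanSpace ℝ (Fin 2)) ∧
    0 < LEx1 γ (!₂[2 * γ * Real.pi / (1 + γ), 2 * Real.pi] : EuclideanSpace ℝ (Fin 2)) ∧
    ¬ ∃ μ : ℝ, 0 < μ ∧ ∀ p : EuclideanSpace ℝ (Fin 2),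
      2 * μ * (LEx1 γ p - ⨅ q : EuclideanSpace ℝ (Fin 2), LEx1 γ q) ≤
        ‖gradient (LEx1 γ) p‖ ^ 2 := by
  have h1γ : (0:ℝ) < 1 + γ := by linarith
  set a : ℝ := 2 * γ * Real.pi / (1 + γ) with ha_def
  have ha : a * (1 + γ) = 2 * γ * Real.pi := by
    rw [ha_def, div_mul_cancel₀ _ h1γ.ne']
  have hapos : 0 < a := by
    apply div_pos _ h1γ
    positivity
  set x : EuclideanSpace ℝ (Fin 2) := !₂[a, 2 * Real.pi] with hx_def
  have hx0 : x 0 = a := rfl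
  have hx1 : x 1 = 2 * Real.pi := rfl
  have hL0 : ∀ p : EuclideanSpace ℝ (Fin 2), 0 ≤ LEx1 γ p := by
    intro p
    have : (0:ℝ) ≤ γ := hγ.le
    unfold LEx1
    positivity
  have hinf : (⨅ p : EuclideanSpace ℝ (Fin 2), LEx1 γ p) = 0 := by
    apply le_antisymm
    · have hbdd : BddBelow (Set.range (LEx1 γ)) := ⟨0, by rintro y ⟨p, rfl⟩; exact hL0 p⟩
      have h := ciInf_le hbdd (0 : EuclideanSpace ℝ (Fin 2))
      have h0 : LEx1 γ 0 = 0 := by simp [LEx1]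
      linarith
    · exact le_ciInf hL0
  -- gradient
  have hsin : Real.sin (x 1) = 0 := by rw [hx1]; exact Real.sin_two_pi
  have hcos : Real.cos (x 1) = 1 := by rw [hx1]; exact Real.cos_two_pi
  set A : EuclideanSpace ℝ (Fin 2) →L[ℝ] ℝ := EuclideanSpace.proj 0
  set B : EuclideanSpace ℝ (Fin 2) →L[ℝ] ℝ := EuclideanSpace.proj 1
  have hA : HasFDerivAt (fun p : EuclideanSpace ℝ (Fin 2) => p 0) A x := A.hasFDerivAt
  have hB : HasFDerivAt (fun p : EuclideanSpace ℝ (Fin 2) => p 1) B x := B.hasFDerivAt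
  have hsin' : HasFDerivAt (fun p : EuclideanSpace ℝ (Fin 2) => Real.sin (p 1))
      (Real.cos (x 1) • B) x := by have := (Real.hasDerivAt_sin (x 1)).comp_hasFDerivAt x hB; exact this
  have hf1 : HasFDerivAt (fun p : EuclideanSpace ℝ (Fin 2) => p 0 - Real.sin (p 1))
      (A - Real.cos (x 1) • B) x := hA.sub hsin'
  have hf2 : HasFDerivAt (fun p : EuclideanSpace ℝ (Fin 2) => p 0 - p 1) (A - B) x := hA.sub hB
  have hsq1 : HasFDerivAt (fun p : EuclideanSpace ℝ (Fin 2) => (p 0 - Real.sin (p 1)) ^ 2)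
      (((2:ℕ) * (x 0 - Real.sin (x 1)) ^ (2-1)) • (A - Real.cos (x 1) • B)) x :=
    by have := (hasDerivAt_pow 2 (x 0 - Real.sin (x 1))).comp_hasFDerivAt x hf1; exact this
  have hsq2 : HasFDerivAt (fun p : EuclideanSpace ℝ (Fin 2) => (p 0 - p 1) ^ 2)
      (((2:ℕ) * (x 0 - x 1) ^ (2-1)) • (A - B)) x :=
    by have := (hasDerivAt_pow 2 (x 0 - x 1)).comp_hasFDerivAt x hf2; exact this
  have hfd : HasFDerivAt (LEx1 γ)
      ((1/2 : ℝ) • (((2:ℕ) * (x 0 - Real.sin (x 1)) ^ (2-1)) • (A - Real.cos (x 1) • B))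
        + (γ/2 : ℝ) • (((2:ℕ) * (x 0 - x 1) ^ (2-1)) • (A - B))) x :=
    (hsq1.const_mul (1/2)).add (hsq2.const_mul (γ/2))
  have hc : a + γ * (a - 2 * Real.pi) = 0 := by nlinarith [ha]
  have hzero : ((1/2 : ℝ) • (((2:ℕ) * (x 0 - Real.sin (x 1)) ^ (2-1)) • (A - Real.cos (x 1) • B))
        + (γ/2 : ℝ) • (((2:ℕ) * (x 0 - x 1) ^ (2-1)) • (A - B)))
      = (0 : EuclideanSpace ℝ (Fin 2) →L[ℝ] ℝ) := by
    rw [hsin, hcos, hx0, hx1]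
    ext p
    simp only [ContinuousLinearMap.add_apply, ContinuousLinearMap.smul_apply,
      ContinuousLinearMap.sub_apply, one_smul, smul_eq_mul, ContinuousLinearMap.zero_apply,
      Nat.cast_ofNat, pow_one, sub_zero]
    linear_combination (A p - B p) * hc
  have hgrad : HasGradientAt (LEx1 γ) 0 x := by
    rw [hasGradientAt_iff_hasFDerivAt, map_zero]
    rw [hzero] at hfd
    exact hfd
  have hLx : 0 < LEx1 γ x := by
    have hLxe : LEx1 γ x = 1/2 * a^2 + γ/2 * (a - 2*Real.pi)^2 := by
      show 1/2 * (x 0 - Real.sin (x 1))^2 + γ/2 * (x 0 - x 1)^2 = _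
      rw [hx0, hx1, Real.sin_two_pi]; ring
    rw [hLxe]
    have h1 : 0 < a^2 := pow_pos hapos 2
    nlinarith [sq_nonneg (a - 2*Real.pi)]
  refine ⟨hinf, hgrad, hLx, ?_⟩
  rintro ⟨μ, hμ, hPL⟩
  have := hPL x
  rw [hinf, hgrad.gradient] at this
  simp only [norm_zero, sub_zero] at this
  nlinarith
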